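/- Let n ≥ 1 and let x₁, …, xₙ be real numbers belonging to a real algebraic number field of degree n+1 over ℚ, such that 1, x₁, …, xₙ are linearly independent over ℚ. Then there is a constant c > 0 such that ‖k₁x₁ + ⋯ + kₙxₙ‖ ≥ c·(max over j of |kⱼ|)^{-n} for every nonzero integer vector (k₁, …, kₙ) ∈ ℤⁿ. -/

import Mathlib

/-- Distance from a real number to the nearest integer. -/
noncomputable def dnint (y : ℝ) : ℝ := ⨅ m : ℤ, |y - m|

open Module

private lemma ratmul_int' {q : ℚ} {d : ℕ} (h : q.den ∣ d) : ∃ z : ℤ, (d:ℚ) * q = z := by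
  obtain ⟨e, he⟩ := h
  refine ⟨q.num * e, ?_⟩
  subst he
  push_cast
  rw [show ((q.den : ℚ) * e * q) = ((q.den:ℚ) * q) * e by ring, Rat.den_mul_eq_num]

set_option maxHeartbeats 1000000 in
theorem stmt_14 (n : ℕ) (hn : 1 ≤ n) (x : Fin n → ℝ)
    (K : Subfield ℝ) (hK : Module.finrank ℚ K = n + 1)
    (hxK : ∀ j, x j ∈ K)
    (hli : LinearIndependent ℚ (Fin.cons (1 : ℝ) x : Fin (n + 1) → ℝ)) :
    ∃ c > (0:ℝ), ∀ k : Fin n → ℤ, k ≠ 0 →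
      dnint (∑ j, (k j : ℝ) * x j) ≥ c * ((⨆ j, |k j| : ℤ) : ℝ) ^ (-(n : ℝ)) := by
  classical
  haveI : FiniteDimensional ℚ K := FiniteDimensional.of_finrank_pos (by omega)
  haveI : Algebra.IsSeparable ℚ K := inferInstance
  set xK : Fin n → K := fun j => ⟨x j, hxK j⟩ with hxKdef
  set y : Fin (n+1) → K := Fin.cons 1 xK with hy
  -- linear independence in K
  have hliK : LinearIndependent ℚ y := by
    apply LinearIndependent.of_comp (K.subtype.toRatAlgHom.toLinearMap)
    have : (K.subtype.toRatAlgHom.toLinearMap : K → ℝ) ∘ y = Fin.cons (1:ℝ) x := by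
      funext i
      refine Fin.cases ?_ (fun j => ?_) i <;>
        simp [hy, hxKdef, RingHom.toRatAlgHom, Subfield.coe_one]
    rw [this]; exact hli
  have hcard : Fintype.card (Fin (n+1)) = finrank ℚ K := by simp [hK]
  set b : Basis (Fin (n+1)) ℚ K := basisOfLinearIndependentOfCardEqFinrank hliK hcard with hb
  -- fixed matrices and common denominator
  set A : Fin (n+1) → Matrix (Fin (n+1)) (Fin (n+1)) ℚ :=
    fun i => Algebra.leftMulMatrix b (y i) with hA
  set D : ℕ := ∏ i : Fin (n+1), ∏ p : Fin (n+1), ∏ q : Fin (n+1), (A i p q).den with hD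
  have hDpos : 0 < D := by
    apply Finset.prod_pos; intro i _; apply Finset.prod_pos; intro p _
    apply Finset.prod_pos; intro q _; exact (A i p q).pos
  have hDdvd : ∀ i p q, (A i p q).den ∣ D := by
    intro i p q
    apply dvd_trans (Finset.dvd_prod_of_mem _ (Finset.mem_univ q))
    apply dvd_trans (Finset.dvd_prod_of_mem
      (fun p => ∏ q : Fin (n+1), (A i p q).den) (Finset.mem_univ p))
    exact Finset.dvd_prod_of_mem _ (Finset.mem_univ i)
  -- constants
  set B : ℝ := ∑ j, |x j| with hB
  set Sall : ℝ := ∑ σ : K →ₐ[ℚ] ℂ, ∑ j, ‖σ (xK j)‖ with hSall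
  have hBnn : 0 ≤ B := Finset.sum_nonneg fun j _ => abs_nonneg _
  have hSallnn : 0 ≤ Sall :=
    Finset.sum_nonneg fun σ _ => Finset.sum_nonneg fun j _ => norm_nonneg _
  set C : ℝ := 1 + Sall + B with hC
  have hC1 : 1 ≤ C := by simp only [hC]; linarith
  have hCpos : 0 < C := lt_of_lt_of_le one_pos hC1
  set c1 : ℝ := ((D:ℝ)^(n+1))⁻¹ with hc1
  have hc1pos : 0 < c1 := by positivity
  set c : ℝ := min (1/2) (c1 / C^n) with hc
  clear_value xK y b A D B Sall C c1 c
  have hcpos : 0 < c := by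
    rw [hc]; exact lt_min (by norm_num) (div_pos hc1pos (pow_pos hCpos n))
  refine ⟨c, hcpos, ?_⟩
  -- the main estimate, for every integer m and every bound H on |k j|
  have main : ∀ (k : Fin n → ℤ), k ≠ 0 → ∀ (H : ℤ), (∀ j, |k j| ≤ H) → 1 ≤ H →
      ∀ m : ℤ, c * ((H:ℝ)^n)⁻¹ ≤ |(∑ j, (k j : ℝ) * x j) - m| := by
    intro k hk H hHj hH1 m
    set S : ℝ := ∑ j, (k j : ℝ) * x j with hS
    have hHR : (1:ℝ) ≤ (H:ℝ) := by exact_mod_cast hH1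
    have hHn1 : ((H:ℝ)^n)⁻¹ ≤ 1 := by
      rw [inv_le_one_iff₀]; right; exact one_le_pow₀ hHR
    by_cases h12 : (1:ℝ)/2 ≤ |S - m|
    · calc c * ((H:ℝ)^n)⁻¹ ≤ (1/2) * 1 := by
            rw [hc]
            apply mul_le_mul (min_le_left _ _) hHn1 (by positivity) (by norm_num)
        _ ≤ |S - m| := by linarith
    push_neg at h12
    -- the algebraic element
    set α : K := (∑ j, k j • xK j) - m • 1 with hα
    clear_value α
    have hαS : ((α : K) : ℝ) = S - m := by
      push_cast [hα, hxKdef, hS]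
      norm_num
    have hα0 : α ≠ 0 := by
      intro h0
      rw [h0] at hαS
      have hsum : ∑ i, (Fin.cons (-(m:ℚ)) (fun j => (k j : ℚ)) : Fin (n+1) → ℚ) i •
          (Fin.cons (1:ℝ) x : Fin (n+1) → ℝ) i = 0 := by
        rw [Fin.sum_univ_succ]
        simp only [Fin.cons_succ, Fin.cons_zero]
        have hterm : ∀ j : Fin n, ((k j : ℚ)) • x j = (k j : ℝ) * x j := by
          intro j; rw [Rat.smul_def]; push_cast; ring
        rw [Finset.sum_congr rfl fun j _ => hterm j, Rat.smul_def]
        push_cast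
        have h00 : (0:ℝ) = S - m := by exact_mod_cast hαS
        rw [← hS]
        linarith
      have := (Fintype.linearIndependent_iff.mp hli) _ hsum
      obtain ⟨j, hj⟩ := Function.ne_iff.mp hk
      have := this j.succ
      simp at this
      exact hj this
    -- the norm, lower bound
    set N : ℚ := Algebra.norm ℚ α with hN
    have hN0 : N ≠ 0 := by
      rw [hN, Algebra.norm_ne_zero_iff]; exact hα0
    set cvec : Fin (n+1) → ℤ := Fin.cons (-m) k with hcvec
    have hαrep : α = ∑ i, cvec i • y i := by
      rw [Fin.sum_univ_succ]
      simp only [hcvec, hy, Fin.cons_succ, Fin.cons_zero, hα]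
      rw [neg_smul]
      abel
    have hMsum : Algebra.leftMulMatrix b α = ∑ i, cvec i • A i := by
      rw [hαrep, map_sum, hA]
      exact Finset.sum_congr rfl fun i _ => map_zsmul _ _ _
    have hint : ∀ p q, ∃ z : ℤ, (D:ℚ) * (Algebra.leftMulMatrix b α) p q = z := by
      intro p q
      have : ∀ i : Fin (n+1), ∃ z : ℤ, (D:ℚ) * ((cvec i • A i) p q) = z := by
        intro i
        obtain ⟨z, hz⟩ := ratmul_int' (hDdvd i p q)
        refine ⟨cvec i * z, ?_⟩
        simp only [Matrix.smul_apply, zsmul_eq_mul]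
        push_cast
        rw [show (D:ℚ) * ((cvec i : ℚ) * A i p q) = (cvec i:ℚ) * ((D:ℚ) * A i p q) by ring, hz]
      choose z hz using this
      refine ⟨∑ i, z i, ?_⟩
      rw [hMsum, Matrix.sum_apply, Finset.mul_sum]
      push_cast
      exact Finset.sum_congr rfl fun i _ => hz i
    have hdetZ : ∃ z : ℤ, ((D:ℚ) • Algebra.leftMulMatrix b α).det = z := by
      choose Z hZ using hint
      refine ⟨(Matrix.of Z).det, ?_⟩
      have : ((D:ℚ) • Algebra.leftMulMatrix b α) = (Int.castRingHom ℚ).mapMatrix (Matrix.of Z) := by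
        ext p q
        simp only [Matrix.smul_apply, smul_eq_mul, RingHom.mapMatrix_apply, Matrix.map_apply,
          Matrix.of_apply, Int.coe_castRingHom]
        exact hZ p q
      rw [this, ← RingHom.map_det]
      rfl
    obtain ⟨z, hz⟩ := hdetZ
    have hdetN : (Algebra.leftMulMatrix b α).det = N := (Algebra.norm_eq_matrix_det b α).symm
    have hzval : (z : ℚ) = (D:ℚ)^(n+1) * N := by
      rw [← hz, Matrix.det_smul, hdetN]
      simp
    have hz0 : z ≠ 0 := by
      intro h0
      rw [h0] at hzval
      have : N = 0 := by
        have hD0 : ((D:ℚ))^(n+1) ≠ 0 := by positivity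
        field_simp at hzval
        exact (mul_eq_zero.mp (by exact_mod_cast hzval.symm)).resolve_left hD0
      exact hN0 this
    have hNlow : c1 ≤ |(N:ℝ)| := by
      have h1z : (1:ℝ) ≤ |(z:ℝ)| := by
        have : (1:ℤ) ≤ |z| := Int.one_le_abs hz0
        calc (1:ℝ) ≤ (|z| : ℤ) := by exact_mod_cast this
          _ = |(z:ℝ)| := by push_cast; ring
      have hzR : |(z:ℝ)| = (D:ℝ)^(n+1) * |(N:ℝ)| := by
        have : ((z:ℚ):ℝ) = ((D:ℚ)^(n+1) * N : ℚ) := by exact_mod_cast congrArg (fun q : ℚ => (q:ℝ)) hzval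
        push_cast at this
        rw [this, abs_mul, abs_of_nonneg (by positivity : (0:ℝ) ≤ (D:ℝ)^(n+1))]
      have h1 : (1:ℝ) ≤ (D:ℝ)^(n+1) * |(N:ℝ)| := hzR ▸ h1z
      calc c1 = ((D:ℝ)^(n+1))⁻¹ * 1 := by rw [hc1]; ring
        _ ≤ ((D:ℝ)^(n+1))⁻¹ * ((D:ℝ)^(n+1) * |(N:ℝ)|) := by
            apply mul_le_mul_of_nonneg_left h1 (by positivity)
        _ = |(N:ℝ)| := by field_simp
    -- the norm, upper bound via embeddings
    have hprod : |(N:ℝ)| = ∏ σ : K →ₐ[ℚ] ℂ, ‖σ α‖ := by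
      have h := Algebra.norm_eq_prod_embeddings ℚ ℂ α
      have := congrArg (fun z : ℂ => ‖z‖) h
      rw [norm_prod] at this
      rw [← this]
      have : (algebraMap ℚ ℂ) N = (((N:ℝ)):ℂ) := by
        rw [eq_ratCast (algebraMap ℚ ℂ) N]; push_cast; ring
      rw [this, Complex.norm_real, Real.norm_eq_abs]
    -- bound on each embedding
    have hemb : ∀ σ : K →ₐ[ℚ] ℂ, ‖σ α‖ ≤ (H:ℝ) * C := by
      intro σ
      have hσα : σ α = (∑ j, (k j : ℂ) * σ (xK j)) - (m:ℂ) := by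
        rw [hα, map_sub, map_sum]
        congr 1
        · exact Finset.sum_congr rfl fun j _ => by
            rw [map_zsmul]; push_cast; rw [zsmul_eq_mul]
        · rw [map_zsmul, map_one, zsmul_eq_mul]; push_cast; ring
      rw [hσα]
      have hmabs : |(m:ℝ)| ≤ (H:ℝ) * (B + 1) := by
        have h1 : |(m:ℝ)| ≤ |S| + |S - m| := by
          calc |(m:ℝ)| = |S - (S - m)| := by ring_nf
            _ ≤ |S| + |S - m| := abs_sub _ _
        have h2 : |S| ≤ (H:ℝ) * B := by
          rw [hS]
          calc |∑ j, (k j:ℝ) * x j| ≤ ∑ j, |(k j:ℝ) * x j| := Finset.abs_sum_le_sum_abs _ _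
            _ ≤ ∑ j, (H:ℝ) * |x j| := by
                apply Finset.sum_le_sum; intro j _
                rw [abs_mul]
                apply mul_le_mul_of_nonneg_right _ (abs_nonneg _)
                calc |(k j:ℝ)| = ((|k j| : ℤ):ℝ) := by push_cast; ring
                  _ ≤ (H:ℝ) := by exact_mod_cast hHj j
            _ = (H:ℝ) * B := by rw [hB, Finset.mul_sum]
        calc |(m:ℝ)| ≤ |S| + |S - m| := h1
          _ ≤ (H:ℝ) * B + 1/2 := by linarith
          _ ≤ (H:ℝ) * B + (H:ℝ) := by linarith
          _ = (H:ℝ) * (B + 1) := by ring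
      calc ‖(∑ j, (k j : ℂ) * σ (xK j)) - (m:ℂ)‖
          ≤ ‖∑ j, (k j : ℂ) * σ (xK j)‖ + ‖(m:ℂ)‖ := by
            apply norm_sub_le
        _ ≤ (∑ j, (H:ℝ) * ‖σ (xK j)‖) + |(m:ℝ)| := by
            apply add_le_add
            · calc ‖∑ j, (k j : ℂ) * σ (xK j)‖
                  ≤ ∑ j, ‖(k j : ℂ) * σ (xK j)‖ :=
                    norm_sum_le _ _
                _ ≤ ∑ j, (H:ℝ) * ‖σ (xK j)‖ := by
                    apply Finset.sum_le_sum; intro j _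
                    rw [norm_mul]
                    apply mul_le_mul_of_nonneg_right _ (norm_nonneg _)
                    rw [show ((k j : ℂ)) = (((k j:ℝ)):ℂ) by push_cast; ring,
                      Complex.norm_real, Real.norm_eq_abs]
                    calc |(k j:ℝ)| = ((|k j| : ℤ):ℝ) := by push_cast; ring
                      _ ≤ (H:ℝ) := by exact_mod_cast hHj j
            · rw [show ((m:ℂ)) = (((m:ℝ)):ℂ) by push_cast; ring, Complex.norm_real, Real.norm_eq_abs]
        _ ≤ (H:ℝ) * Sall + (H:ℝ) * (B + 1) := by
            apply add_le_add _ hmabs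
            rw [← Finset.mul_sum]
            apply mul_le_mul_of_nonneg_left _ (by positivity)
            rw [hSall]
            apply Finset.single_le_sum (f := fun σ => ∑ j, ‖σ (xK j)‖)
              (fun τ _ => Finset.sum_nonneg fun j _ => norm_nonneg _) (Finset.mem_univ σ)
        _ = (H:ℝ) * C := by rw [hC]; ring
    -- the real embedding
    set ι : K →ₐ[ℚ] ℂ := (Complex.ofRealHom.comp K.subtype).toRatAlgHom with hι
    have hια : ‖ι α‖ = |S - m| := by
      have h1 : ι α = (((α:K):ℝ):ℂ) := by
        rw [hι]
        simp only [RingHom.toRatAlgHom, AlgHom.coe_mk, RingHom.coe_comp, Function.comp_apply,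
          Complex.ofRealHom_eq_coe, Subfield.coe_subtype]
      rw [h1, Complex.norm_real, Real.norm_eq_abs, hαS]
    have hcardemb : (Finset.univ.erase ι).card = n := by
      rw [Finset.card_erase_of_mem (Finset.mem_univ ι), Finset.card_univ, AlgHom.card ℚ K ℂ, hK]
      rfl
    have hsplit : |(N:ℝ)| = |S - m| * ∏ σ ∈ Finset.univ.erase ι, ‖σ α‖ := by
      rw [hprod, ← hια, ← Finset.mul_prod_erase Finset.univ _ (Finset.mem_univ ι)]
    have hprodbound : ∏ σ ∈ Finset.univ.erase ι, ‖σ α‖ ≤ ((H:ℝ) * C)^n := by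
      calc ∏ σ ∈ Finset.univ.erase ι, ‖σ α‖
          ≤ ∏ σ ∈ Finset.univ.erase ι, (H:ℝ) * C := by
            apply Finset.prod_le_prod (fun σ _ => norm_nonneg _) (fun σ _ => hemb σ)
        _ = ((H:ℝ) * C)^n := by rw [Finset.prod_const, hcardemb]
    -- conclude
    have hfinal : c1 ≤ |S - m| * ((H:ℝ) * C)^n := by
      calc c1 ≤ |(N:ℝ)| := hNlow
        _ = |S - m| * ∏ σ ∈ Finset.univ.erase ι, ‖σ α‖ := hsplit
        _ ≤ |S - m| * ((H:ℝ) * C)^n := by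
            apply mul_le_mul_of_nonneg_left hprodbound (abs_nonneg _)
    have hHCpos : (0:ℝ) < ((H:ℝ) * C)^n := by positivity
    rw [hc]
    calc min (1/2) (c1 / C^n) * ((H:ℝ)^n)⁻¹ ≤ (c1 / C^n) * ((H:ℝ)^n)⁻¹ := by
          apply mul_le_mul_of_nonneg_right (min_le_right _ _) (by positivity)
      _ = c1 / ((H:ℝ) * C)^n := by rw [mul_pow]; ring
      _ ≤ |S - m| := by
          rw [div_le_iff₀ hHCpos]
          exact hfinal
  -- final assembly
  intro k hk
  set H : ℤ := ⨆ j, |k j| with hH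
  have hbdd : BddAbove (Set.range fun j => |k j|) := Set.Finite.bddAbove (Set.finite_range _)
  have hHj : ∀ j, |k j| ≤ H := fun j => le_ciSup hbdd j
  have hH1 : 1 ≤ H := by
    obtain ⟨j, hj⟩ := Function.ne_iff.mp hk
    calc (1:ℤ) ≤ |k j| := Int.one_le_abs hj
      _ ≤ H := hHj j
  have hHR : (1:ℝ) ≤ (H:ℝ) := by exact_mod_cast hH1
  have hrpow : ((H:ℤ):ℝ) ^ (-(n:ℝ)) = ((H:ℝ)^n)⁻¹ := by
    rw [Real.rpow_neg (by linarith), Real.rpow_natCast]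
  rw [ge_iff_le, hrpow]
  unfold dnint
  apply le_ciInf
  intro m
  exact main k hk H hHj hH1 m
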